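/- arXiv:2008.08691 — 10 statements merged into one kernel-verified Lean document; each statement's English description precedes it below -/
import Mathlib

section
/- Let α_c := (5√10 − 13)/3. Then sup{α ∈ (0,∞) : for all f ∈ [0,1], 1 − 1/(α(1 + 2f(1−f))) < f} = α_c, and inf{α ∈ (0,∞) : there exists f ∈ [0,1] with 2f³ − 4f² + f + 1 − 1/α > 0} = α_c. -/
open Set Real

theorem critical_alpha_characterization :
    sSup {α : ℝ | 0 < α ∧ ∀ f ∈ Set.Icc (0:ℝ) 1,
        1 - 1 / (α * (1 + 2 * f * (1 - f))) < f} = (5 * Real.sqrt 10 - 13) / 3 ∧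
    sInf {α : ℝ | 0 < α ∧ ∃ f ∈ Set.Icc (0:ℝ) 1,
        2 * f ^ 3 - 4 * f ^ 2 + f + 1 - 1 / α > 0} = (5 * Real.sqrt 10 - 13) / 3 := by
  set s : ℝ := Real.sqrt 10 with hsdef
  have hs : s ^ 2 = 10 := Real.sq_sqrt (by norm_num)
  have hs0 : (0:ℝ) ≤ s := Real.sqrt_nonneg 10
  have hs3 : 3 < s := by nlinarith
  have hs4 : s < 4 := by nlinarith
  set αc : ℝ := (5 * s - 13) / 3 with hαcdef
  set M : ℝ := (5 * s + 13) / 27 with hMdef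
  have hαc0 : 0 < αc := by rw [hαcdef]; nlinarith
  have hM0 : 0 < M := by rw [hMdef]; nlinarith
  have hαcM : αc * M = 1 := by
    rw [hαcdef, hMdef]; field_simp; linear_combination 25 * hs
  -- the critical point
  set fc : ℝ := (4 - s) / 6 with hfc
  have hfcmem : fc ∈ Set.Icc (0:ℝ) 1 := by
    constructor <;> [rw [hfc]; rw [hfc]] <;> nlinarith
  have hgfc : 2 * fc ^ 3 - 4 * fc ^ 2 + fc + 1 = M := by
    rw [hfc, hMdef]; field_simp; linear_combination (-54 * s) * hs
  -- g is bounded by M on [0,1]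
  have hgle : ∀ f ∈ Set.Icc (0:ℝ) 1, 2 * f ^ 3 - 4 * f ^ 2 + f + 1 ≤ M := by
    intro f hf
    obtain ⟨hf0, hf1⟩ := hf
    have h2 : (0:ℝ) ≤ 2 + s - 3 * f := by nlinarith
    have hprod : 0 ≤ (6 * f - 4 + s) ^ 2 * (2 + s - 3 * f) :=
      mul_nonneg (sq_nonneg _) h2
    rw [hMdef]
    nlinarith [hprod, hs, mul_nonneg hs0 hs0, sq_nonneg (s - 3)]
  -- equivalence for the first condition
  have hcond : ∀ α : ℝ, 0 < α → ∀ f ∈ Set.Icc (0:ℝ) 1,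
      ((1 - 1 / (α * (1 + 2 * f * (1 - f))) < f) ↔
        α * (2 * f ^ 3 - 4 * f ^ 2 + f + 1) < 1) := by
    intro α hα f hf
    obtain ⟨hf0, hf1⟩ := hf
    have hD : 0 < α * (1 + 2 * f * (1 - f)) := by
      apply mul_pos hα; nlinarith
    rw [sub_lt_iff_lt_add, ← sub_lt_iff_lt_add', lt_div_iff₀ hD]
    constructor <;> intro h <;> nlinarith
  -- first set is Ioo 0 αc
  have hA : {α : ℝ | 0 < α ∧ ∀ f ∈ Set.Icc (0:ℝ) 1,
      1 - 1 / (α * (1 + 2 * f * (1 - f))) < f} = Set.Ioo 0 αc := by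
    ext α
    simp only [Set.mem_setOf_eq, Set.mem_Ioo]
    constructor
    · rintro ⟨hα, hall⟩
      refine ⟨hα, ?_⟩
      have := (hcond α hα fc hfcmem).mp (hall fc hfcmem)
      rw [hgfc] at this
      -- α * M < 1 = αc * M, M > 0 ⇒ α < αc
      nlinarith
    · rintro ⟨hα, hlt⟩
      refine ⟨hα, fun f hf => ?_⟩
      rw [hcond α hα f hf]
      have hg := hgle f hf
      calc α * (2 * f ^ 3 - 4 * f ^ 2 + f + 1) ≤ α * M :=
            mul_le_mul_of_nonneg_left hg hα.le
        _ < αc * M := by exact mul_lt_mul_of_pos_right hlt hM0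
        _ = 1 := hαcM
  -- second set is Ioi αc
  have hB : {α : ℝ | 0 < α ∧ ∃ f ∈ Set.Icc (0:ℝ) 1,
      2 * f ^ 3 - 4 * f ^ 2 + f + 1 - 1 / α > 0} = Set.Ioi αc := by
    ext α
    simp only [Set.mem_setOf_eq, Set.mem_Ioi]
    constructor
    · rintro ⟨hα, f, hf, hgt⟩
      have hg := hgle f hf
      have h1 : 1 / α < M := by linarith
      have h2 : 1 < M * α := (div_lt_iff₀ hα).mp h1
      nlinarith [h2, hαcM, hM0]
    · intro hlt
      have hα : 0 < α := lt_trans hαc0 hlt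
      refine ⟨hα, fc, hfcmem, ?_⟩
      have h1 : 1 / α < 1 / αc := one_div_lt_one_div_of_lt hαc0 hlt
      have h2 : (1:ℝ) / αc = M := by
        field_simp
        linarith [hαcM, mul_comm αc M]
      rw [hgfc]
      linarith
  rw [hA, hB]
  exact ⟨csSup_Ioo hαc0, csInf_Ioi⟩
end

section
/- For every fixed β > 0, the Erlang blocking probability E(β,K) := ((βK)^K / K!) / (∑_{k=0}^{K} (βK)^k / k!) converges, as the integer K → ∞, to max{1 − 1/β, 0}. -/
open Filter Finset

noncomputable def cE (β : ℝ) (K j : ℕ) : ℝ := (Nat.descFactorial K j : ℝ) / (β * K) ^ j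

lemma cE_nonneg {β : ℝ} (hβ : 0 < β) (K j : ℕ) : 0 ≤ cE β K j := by
  unfold cE; positivity

lemma cE_eq_zero {β : ℝ} {K j : ℕ} (h : K < j) : cE β K j = 0 := by
  unfold cE
  rw [Nat.descFactorial_eq_zero_iff_lt.mpr h]
  simp

lemma cE_le {β : ℝ} (hβ : 0 < β) (K j : ℕ) : cE β K j ≤ (1 / β) ^ j := by
  rcases Nat.eq_zero_or_pos K with rfl | hK
  · rcases j with _ | j
    · simp [cE]
    · rw [cE_eq_zero (Nat.succ_pos j)]
      positivity
  · have hK' : (0 : ℝ) < K := by exact_mod_cast hK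
    have h1 : cE β K j ≤ ((K : ℝ)) ^ j / (β * K) ^ j := by
      unfold cE
      gcongr
      exact_mod_cast Nat.descFactorial_le_pow K j
    calc cE β K j ≤ ((K : ℝ)) ^ j / (β * K) ^ j := h1
      _ = ((K : ℝ) / (β * K)) ^ j := (div_pow _ _ _).symm
      _ = (1 / β) ^ j := by
        congr 1
        rw [eq_div_iff hβ.ne', div_mul_eq_mul_div, mul_comm ((K : ℝ)) β,
          div_self (by positivity)]

lemma cE_tsum_eq {β : ℝ} (K : ℕ) :
    ∑' j, cE β K j = ∑ j ∈ range (K + 1), cE β K j :=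
  tsum_eq_sum (fun j hj => cE_eq_zero (by simpa using hj))

lemma cE_tendsto {β : ℝ} (hβ : 0 < β) (j : ℕ) :
    Tendsto (fun K : ℕ => cE β K j) atTop (nhds ((1 / β) ^ j)) := by
  have key : ∀ᶠ K : ℕ in atTop, cE β K j = ∏ i ∈ range j, (1 - (i : ℝ) / K) * (1 / β) := by
    filter_upwards [eventually_ge_atTop (j + 1)] with K hK
    have hK0 : (0 : ℝ) < K := by
      have : 0 < K := lt_of_lt_of_le (Nat.succ_pos j) hK
      exact_mod_cast this
    unfold cE
    rw [Nat.descFactorial_eq_prod_range, Nat.cast_prod]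
    rw [show (β * (K : ℝ)) ^ j = ∏ _i ∈ range j, (β * K) by rw [prod_const, card_range]]
    rw [← prod_div_distrib]
    apply prod_congr rfl
    intro i hi
    have hiK : i ≤ K := le_trans (le_of_lt (mem_range.mp hi)) (Nat.le_of_succ_le hK)
    rw [Nat.cast_sub hiK, mul_comm β ((K : ℝ)), ← div_div, sub_div,
      div_self hK0.ne', mul_one_div]
  rw [show ((1 / β) ^ j : ℝ) = ∏ _i ∈ range j, (1 - (0 : ℝ)) * (1 / β) by
    rw [prod_const, card_range]; norm_num]
  apply Tendsto.congr' (Filter.EventuallyEq.symm key)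
  apply tendsto_finset_prod
  intro i _
  exact ((tendsto_const_nhds.sub
    (tendsto_const_div_atTop_nhds_zero_nat (i : ℝ))).mul tendsto_const_nhds)

lemma sum_identity {β : ℝ} (hβ : 0 < β) {K : ℕ} (hK : 1 ≤ K) :
    ∑ k ∈ range (K + 1), (β * K) ^ k / (Nat.factorial k : ℝ) =
      ((β * K) ^ K / (Nat.factorial K : ℝ)) * ∑ j ∈ range (K + 1), cE β K j := by
  have hK0 : (0 : ℝ) < K := by exact_mod_cast hK
  have hbK : (0 : ℝ) < β * K := by positivity
  rw [mul_sum]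
  rw [← Finset.sum_range_reflect (fun k => (β * (K:ℝ)) ^ k / (Nat.factorial k : ℝ)) (K + 1)]
  apply sum_congr rfl
  intro j hj
  have hjK : j ≤ K := Nat.lt_succ_iff.mp (mem_range.mp hj)
  simp only [Nat.add_sub_cancel]
  unfold cE
  have hfac : ((Nat.factorial K : ℝ)) = (Nat.factorial (K - j) : ℝ) * (Nat.descFactorial K j : ℝ) := by
    rw [← Nat.cast_mul, Nat.factorial_mul_descFactorial hjK]
  have hpow : (β * (K : ℝ)) ^ K = (β * K) ^ (K - j) * (β * K) ^ j := by
    rw [← pow_add, Nat.sub_add_cancel hjK]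
  have hd : (0 : ℝ) < (Nat.descFactorial K j : ℝ) := by
    have : K.descFactorial j ≠ 0 := by
      rw [Ne, Nat.descFactorial_eq_zero_iff_lt]
      omega
    exact_mod_cast Nat.pos_of_ne_zero this
  rw [hfac, hpow]
  have h1 : (Nat.factorial (K - j) : ℝ) ≠ 0 := by positivity
  have h2 : (Nat.factorial K : ℝ) ≠ 0 := by positivity
  field_simp

theorem erlang_blocking_limit (β : ℝ) (hβ : 0 < β) :
    Tendsto (fun K : ℕ =>
        ((β * K) ^ K / (Nat.factorial K : ℝ)) /
          (∑ k ∈ Finset.range (K + 1), (β * K) ^ k / (Nat.factorial k : ℝ)))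
      atTop (nhds (max (1 - 1 / β) 0)) := by
  have heq : ∀ᶠ K : ℕ in atTop,
      ((β * K) ^ K / (Nat.factorial K : ℝ)) /
        (∑ k ∈ Finset.range (K + 1), (β * K) ^ k / (Nat.factorial k : ℝ)) =
      (∑ j ∈ range (K + 1), cE β K j)⁻¹ := by
    filter_upwards [eventually_ge_atTop 1] with K hK
    have hK0 : (0 : ℝ) < K := by exact_mod_cast hK
    have ha : (0 : ℝ) < (β * K) ^ K / (Nat.factorial K : ℝ) := by positivity
    rw [sum_identity hβ hK, div_mul_cancel_left₀ ha.ne' _]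
  rcases le_or_gt β 1 with h1 | h1
  · have hmax : max (1 - 1 / β) 0 = 0 :=
      max_eq_right (by linarith [one_le_one_div hβ h1])
    rw [hmax]
    have hsum : Tendsto (fun K : ℕ => ∑ j ∈ range (K + 1), cE β K j) atTop atTop := by
      rw [tendsto_atTop]
      intro b
      obtain ⟨m, hm⟩ := exists_nat_ge b
      have hG : Tendsto (fun K : ℕ => ∑ j ∈ range (m + 1), cE β K j) atTop
          (nhds (∑ j ∈ range (m + 1), (1 / β) ^ j)) :=
        tendsto_finset_sum _ (fun j _ => cE_tendsto hβ j)
      have hlim : b < ∑ j ∈ range (m + 1), (1 / β) ^ j := by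
        have hterm : ∀ j ∈ range (m + 1), (1 : ℝ) ≤ (1 / β) ^ j := fun j _ =>
          one_le_pow₀ (one_le_one_div hβ h1)
        calc b ≤ m := hm
          _ < (m : ℝ) + 1 := lt_add_one _
          _ = ∑ _j ∈ range (m + 1), (1 : ℝ) := by simp
          _ ≤ _ := sum_le_sum hterm
      filter_upwards [hG.eventually (eventually_gt_nhds hlim), eventually_ge_atTop m]
        with K h1K h2K
      refine le_trans h1K.le (sum_le_sum_of_subset_of_nonneg ?_ fun j _ _ => cE_nonneg hβ K j)
      exact range_subset_range.mpr (by omega)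
    exact Tendsto.congr' (Filter.EventuallyEq.symm heq) hsum.inv_tendsto_atTop
  · have hr0 : (0 : ℝ) ≤ 1 / β := by positivity
    have hr1 : 1 / β < 1 := by rw [div_lt_one hβ]; exact h1
    have hsum : Tendsto (fun K : ℕ => ∑ j ∈ range (K + 1), cE β K j) atTop
        (nhds ((1 - 1 / β)⁻¹)) := by
      have h := tendsto_tsum_of_dominated_convergence (f := fun (K j : ℕ) => cE β K j)
        (g := fun j : ℕ => (1 / β) ^ j) (bound := fun j : ℕ => (1 / β) ^ j)
        (summable_geometric_of_lt_one hr0 hr1) (cE_tendsto hβ)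
        (Eventually.of_forall fun K j => by
          rw [Real.norm_of_nonneg (cE_nonneg hβ K j)]; exact cE_le hβ K j)
      rw [tsum_geometric_of_lt_one hr0 hr1] at h
      exact h.congr (fun K => cE_tsum_eq K)
    have hpos : (0 : ℝ) < 1 - 1 / β := by linarith
    have h := hsum.inv₀ (by positivity : ((1 - 1 / β)⁻¹ : ℝ) ≠ 0)
    rw [inv_inv] at h
    rw [max_eq_left hpos.le]
    exact Tendsto.congr' (Filter.EventuallyEq.symm heq) h
end

section
/- For every β > 0 and every positive integer K, the Erlang blocking probability satisfies E(β,K) ≥ max{1 − 1/β, 0}. -/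
open Finset

lemma fact_le_aux (k K : ℕ) (h : k ≤ K) : K.factorial ≤ k.factorial * K ^ (K - k) := by
  induction K with
  | zero => simp_all
  | succ n ih =>
    rcases Nat.eq_or_lt_of_le h with h1 | h2
    · subst h1; simp
    · have hk : k ≤ n := Nat.lt_succ_iff.mp h2
      calc (n+1).factorial = (n+1) * n.factorial := rfl
        _ ≤ (n+1) * (k.factorial * n ^ (n-k)) := Nat.mul_le_mul_left _ (ih hk)
        _ ≤ (n+1) * (k.factorial * (n+1) ^ (n-k)) :=
            Nat.mul_le_mul_left _ (Nat.mul_le_mul_left _ (Nat.pow_le_pow_left (Nat.le_succ n) _))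
        _ = k.factorial * ((n+1) ^ (n-k) * (n+1)) := by ring
        _ = k.factorial * (n+1) ^ (n-k+1) := by rw [pow_succ]
        _ = k.factorial * (n+1) ^ (n+1-k) := by rw [Nat.succ_sub hk]

theorem erlang_blocking_lower_bound (β : ℝ) (hβ : 0 < β) (K : ℕ) (hK : 1 ≤ K) :
    ((β * K) ^ K / (Nat.factorial K : ℝ)) /
        (∑ k ∈ Finset.range (K + 1), (β * K) ^ k / (Nat.factorial k : ℝ))
      ≥ max (1 - 1 / β) 0 := by
  have hK0 : (0:ℝ) < K := by exact_mod_cast hK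
  have haPos : (0:ℝ) < β * K := by positivity
  have hfK : (0:ℝ) < K.factorial := by exact_mod_cast K.factorial_pos
  have hSpos : 0 < ∑ k ∈ Finset.range (K+1), (β * K) ^ k / (Nat.factorial k : ℝ) := by
    apply Finset.sum_pos
    · intro i _
      have : (0:ℝ) < i.factorial := by exact_mod_cast i.factorial_pos
      positivity
    · exact ⟨0, by simp⟩
  rcases le_or_gt β 1 with hβ1 | hβ1
  · have hm : max (1 - 1/β) 0 = 0 := by
      rw [max_eq_right]
      have : (1:ℝ) ≤ 1/β := by rw [le_div_iff₀ hβ]; linarith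
      linarith
    rw [hm]
    positivity
  · have hinv : 1/β < 1 := by rw [div_lt_one hβ]; exact hβ1
    have hinv0 : 0 < 1/β := by positivity
    have hm : max (1 - 1/β) 0 = 1 - 1/β := max_eq_left (by linarith)
    rw [hm, ge_iff_le, le_div_iff₀ hSpos]
    -- key pointwise bound
    have key : ∀ k ∈ Finset.range (K+1), (β*K) ^ k / (Nat.factorial k : ℝ)
        ≤ ((β*K) ^ K / (Nat.factorial K : ℝ)) * (1/β) ^ (K - k) := by
      intro k hk
      have hkK : k ≤ K := Nat.lt_succ_iff.mp (Finset.mem_range.mp hk)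
      have hfk : (0:ℝ) < k.factorial := by exact_mod_cast k.factorial_pos
      have hsplit : (β*K) ^ K = (β*K) ^ k * (β*K) ^ (K-k) := by
        rw [← pow_add, Nat.add_sub_cancel' hkK]
      have h1 : ((β*K) ^ K / (Nat.factorial K : ℝ)) * (1/β) ^ (K - k)
          = (β*K) ^ k * (K:ℝ) ^ (K-k) / (Nat.factorial K : ℝ) := by
        rw [hsplit, mul_pow, div_pow, one_pow]
        have hbne : β ^ (K-k) ≠ 0 := by positivity
        field_simp
        ring
      rw [h1, div_le_div_iff₀ hfk hfK]
      have hnat : (K.factorial : ℝ) ≤ (k.factorial : ℝ) * (K:ℝ) ^ (K-k) := by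
        have := fact_le_aux k K hkK
        exact_mod_cast this
      have hpk : (0:ℝ) ≤ (β*K) ^ k := by positivity
      calc (β*K) ^ k * (K.factorial : ℝ) ≤ (β*K) ^ k * ((k.factorial : ℝ) * (K:ℝ) ^ (K-k)) :=
            mul_le_mul_of_nonneg_left hnat hpk
        _ = (β*K) ^ k * (K:ℝ) ^ (K-k) * (k.factorial : ℝ) := by ring
    have hsum : (∑ k ∈ Finset.range (K+1), (β*K) ^ k / (Nat.factorial k : ℝ))
        ≤ ((β*K) ^ K / (Nat.factorial K : ℝ)) * ∑ k ∈ Finset.range (K+1), (1/β) ^ (K-k) := by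
      rw [Finset.mul_sum]
      exact Finset.sum_le_sum key
    have hreflect : (∑ k ∈ Finset.range (K+1), ((1:ℝ)/β) ^ (K-k))
        = ∑ k ∈ Finset.range (K+1), ((1:ℝ)/β) ^ k := by
      have := Finset.sum_range_reflect (fun j => ((1:ℝ)/β) ^ j) (K+1)
      simpa using this
    have hgeom : (∑ k ∈ Finset.range (K+1), ((1:ℝ)/β) ^ k) ≤ 1 / (1 - 1/β) := by
      have hne : (1:ℝ)/β ≠ 1 := ne_of_lt hinv
      rw [geom_sum_eq hne]
      have heq : (((1:ℝ)/β) ^ (K+1) - 1)/((1:ℝ)/β - 1) = (1 - ((1:ℝ)/β) ^ (K+1))/(1 - 1/β) := by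
        rw [← neg_div_neg_eq]; ring_nf
      rw [heq]
      have hp : (0:ℝ) ≤ ((1:ℝ)/β) ^ (K+1) := by positivity
      gcongr
      · linarith
    have hNpos : (0:ℝ) < (β*K) ^ K / (Nat.factorial K : ℝ) := by positivity
    calc (1 - 1/β) * ∑ k ∈ Finset.range (K+1), (β*K) ^ k / (Nat.factorial k : ℝ)
        ≤ (1 - 1/β) * (((β*K) ^ K / (Nat.factorial K : ℝ)) * (1/(1 - 1/β))) := by
          apply mul_le_mul_of_nonneg_left _ (by linarith)
          calc _ ≤ ((β*K) ^ K / (Nat.factorial K : ℝ)) * ∑ k ∈ Finset.range (K+1), ((1:ℝ)/β) ^ (K-k) := hsum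
            _ ≤ _ := by
                rw [hreflect]
                exact mul_le_mul_of_nonneg_left hgeom (le_of_lt hNpos)
      _ = (β*K) ^ K / (Nat.factorial K : ℝ) := by
          have h1 : 1 - 1/β ≠ 0 := by
            have : 1/β < 1 := hinv
            intro h; apply absurd h; linarith
          field_simp
end

section
/- Let β > 1 and let σ be a fixed nonnegative integer. Then, as the integer K → ∞ (with K > σ), π_{β,K}({K−σ, K−σ+1, …, K}) = (∑_{ℓ=K−σ}^{K} (βK)^ℓ / ℓ!) / (∑_{k=0}^{K} (βK)^k / k!) converges to 1 − β^{−(σ+1)}. -/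
open Filter Finset

-- ratio term
noncomputable def rr (β : ℝ) (j K : ℕ) : ℝ := ∏ i ∈ Finset.range j, (((K:ℝ) - i) / (β * K))

lemma rr_eq_zero {β : ℝ} {j K : ℕ} (h : K < j) : rr β j K = 0 := by
  apply Finset.prod_eq_zero (Finset.mem_range.2 h)
  simp

lemma rr_nonneg {β : ℝ} (hβ : 0 < β) {j K : ℕ} (hj : j ≤ K) : 0 ≤ rr β j K := by
  apply Finset.prod_nonneg
  intro i hi
  have h1 : (i:ℝ) ≤ K := by exact_mod_cast le_of_lt (lt_of_lt_of_le (Finset.mem_range.1 hi) hj)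
  exact div_nonneg (by linarith) (by positivity)

lemma rr_le {β : ℝ} (hβ : 1 < β) {j K : ℕ} (hK : 1 ≤ K) : |rr β j K| ≤ (1/β)^j := by
  have hβ0 : 0 < β := lt_trans one_pos hβ
  rcases le_or_gt j K with hj | hj
  · rw [abs_of_nonneg (rr_nonneg hβ0 hj)]
    have : (1/β)^j = ∏ i ∈ Finset.range j, (1/β) := by simp
    rw [this]
    apply Finset.prod_le_prod
    · intro i hi
      have h1 : (i:ℝ) ≤ K := by exact_mod_cast le_of_lt (lt_of_lt_of_le (Finset.mem_range.1 hi) hj)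
      exact div_nonneg (by linarith) (by positivity)
    · intro i hi
      rw [div_le_div_iff₀ (by positivity) hβ0]
      have hK' : (0:ℝ) < K := by exact_mod_cast hK
      have : ((K:ℝ) - i) ≤ K := by simp [Nat.cast_nonneg]
      nlinarith
  · rw [rr_eq_zero hj]
    simp
    positivity

lemma rr_tendsto {β : ℝ} (hβ : 1 < β) (j : ℕ) :
    Tendsto (fun K : ℕ => rr β j K) atTop (nhds ((1/β)^j)) := by
  have hβ0 : 0 < β := lt_trans one_pos hβ
  have : ((1/β)^j : ℝ) = ∏ i ∈ Finset.range j, (1/β) := by simp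
  rw [this]
  unfold rr
  apply tendsto_finset_prod
  intro i _
  have h1 : Tendsto (fun K : ℕ => (i:ℝ)/K) atTop (nhds 0) :=
    tendsto_const_nhds.div_atTop tendsto_natCast_atTop_atTop
  have h2 : Tendsto (fun K : ℕ => (1 - (i:ℝ)/K)/β) atTop (nhds (1/β)) := by
    have := (tendsto_const_nhds (x := (1:ℝ)) (f := atTop (α := ℕ))).sub h1
    rw [sub_zero] at this
    exact this.div_const β
  apply h2.congr'
  filter_upwards [eventually_ge_atTop 1] with K hK
  have hK' : (0:ℝ) < K := by exact_mod_cast hK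
  rw [mul_comm, ← div_div]
  congr 1
  rw [sub_div, div_self hK'.ne']

lemma fact_prod {K : ℕ} : ∀ j ≤ K, (∏ i ∈ Finset.range j, ((K:ℝ) - i)) * (Nat.factorial (K - j)) = Nat.factorial K := by
  intro j
  induction j with
  | zero => simp
  | succ j ih =>
    intro hj
    have hjK : j ≤ K := le_of_lt (Nat.lt_of_succ_le hj)
    rw [Finset.prod_range_succ]
    have hcast : (K:ℝ) - j = ((K - j : ℕ) : ℝ) := by
      rw [Nat.cast_sub hjK]
    have hfac : (Nat.factorial (K - j) : ℝ) = (K - j : ℕ) * Nat.factorial (K - (j+1)) := by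
      have h1 : K - j = (K - (j+1)) + 1 := by omega
      have h2 : Nat.factorial (K - j) = (K - j) * Nat.factorial (K - (j+1)) := by
        rw [h1, Nat.factorial_succ, ← h1]
      rw [h2]
      push_cast [Nat.cast_sub hjK]
      ring
    calc (∏ i ∈ Finset.range j, ((K:ℝ) - i)) * ((K:ℝ) - j) * (Nat.factorial (K - (j+1)))
        = (∏ i ∈ Finset.range j, ((K:ℝ) - i)) * (((K - j:ℕ):ℝ) * Nat.factorial (K - (j+1))) := by
          rw [hcast]; ring
      _ = (∏ i ∈ Finset.range j, ((K:ℝ) - i)) * (Nat.factorial (K - j)) := by rw [hfac]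
      _ = Nat.factorial K := ih hjK

lemma term_eq {β : ℝ} (hβ : 1 < β) {j K : ℕ} (hK : 1 ≤ K) (hj : j ≤ K) :
    (β * K) ^ (K - j) / (Nat.factorial (K - j) : ℝ) = rr β j K * ((β * K) ^ K / (Nat.factorial K : ℝ)) := by
  have hβK : (0:ℝ) < β * K := by
    have : (0:ℝ) < K := by exact_mod_cast hK
    nlinarith [lt_trans one_pos hβ]
  have hfac := fact_prod (K := K) j hj
  have hKfac : (0:ℝ) < Nat.factorial K := by exact_mod_cast Nat.factorial_pos K
  have hKjfac : (0:ℝ) < Nat.factorial (K - j) := by exact_mod_cast Nat.factorial_pos (K - j)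
  have hrr : rr β j K = (∏ i ∈ Finset.range j, ((K:ℝ) - i)) / (β*K)^j := by
    unfold rr
    rw [Finset.prod_div_distrib, Finset.prod_const, Finset.card_range]
  rw [hrr]
  have hpow : (β * K) ^ j * (β * K) ^ (K - j) = (β * K) ^ K := by
    rw [← pow_add]
    congr 1
    omega
  field_simp
  rw [← hfac]
  nlinarith [hpow]

theorem erlang_near_full_limit (β : ℝ) (hβ : 1 < β) (σ : ℕ) :
    Tendsto (fun K : ℕ =>
        (∑ ℓ ∈ Finset.Icc (K - σ) K, (β * K) ^ ℓ / (Nat.factorial ℓ : ℝ)) /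
          (∑ k ∈ Finset.range (K + 1), (β * K) ^ k / (Nat.factorial k : ℝ)))
      atTop (nhds (1 - 1 / β ^ (σ + 1))) := by
  have hβ0 : 0 < β := lt_trans one_pos hβ
  have hb1 : (1/β) < 1 := by rw [div_lt_one hβ0]; exact hβ
  have hb0 : (0:ℝ) ≤ 1/β := by positivity
  have hsum : Summable (fun j : ℕ => (1/β)^j) := summable_geometric_of_lt_one hb0 hb1
  -- numerator limit
  have hnum : Tendsto (fun K : ℕ => ∑ j ∈ Finset.range (σ+1), rr β j K) atTop
      (nhds (∑ j ∈ Finset.range (σ+1), (1/β)^j)) :=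
    tendsto_finset_sum _ (fun j _ => rr_tendsto hβ j)
  -- denominator limit via Tannery
  have hden : Tendsto (fun K : ℕ => ∑' j : ℕ, rr β j K) atTop (nhds (∑' j : ℕ, (1/β)^j)) := by
    apply tendsto_tsum_of_dominated_convergence hsum (fun j => rr_tendsto hβ j)
    filter_upwards [eventually_ge_atTop 1] with K hK j
    exact rr_le hβ hK
  have hgeo : ∑' j : ℕ, (1/β:ℝ)^j = 1 / (1 - 1/β) := by
    rw [tsum_geometric_of_lt_one hb0 hb1]
    simp [one_div]
  -- the limit value
  have hne : (1:ℝ) - 1/β ≠ 0 := by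
    have : 1/β < 1 := hb1
    linarith
  have hlim : (∑ j ∈ Finset.range (σ+1), (1/β:ℝ)^j) / (∑' j : ℕ, (1/β:ℝ)^j)
      = 1 - 1 / β ^ (σ + 1) := by
    rw [hgeo, geom_sum_eq (by intro h; rw [h] at hb1; linarith)]
    have hne2 : (1/β:ℝ) - 1 ≠ 0 := by intro h; apply hne; linarith
    rw [div_eq_mul_inv _ (1 / (1 - 1/β)), one_div (1 - 1/β), inv_inv,
      show (1:ℝ) - 1/β = -(1/β - 1) by ring, mul_neg,
      div_mul_cancel₀ _ hne2, div_pow, one_pow]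
    ring
  rw [← hlim]
  have hpos : 0 < ∑' j : ℕ, (1/β:ℝ)^j := by
    rw [hgeo]
    have : 0 < 1 - 1/β := by linarith
    positivity
  have := hnum.div hden (ne_of_gt hpos)
  apply this.congr'
  filter_upwards [eventually_ge_atTop (max σ 1)] with K hK
  have hKσ : σ ≤ K := le_trans (le_max_left _ _) hK
  have hK1 : 1 ≤ K := le_trans (le_max_right _ _) hK
  have htK : (0:ℝ) < (β * K) ^ K / (Nat.factorial K : ℝ) := by
    have h1 : (0:ℝ) < β * K := by
      have : (0:ℝ) < K := by exact_mod_cast hK1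
      positivity
    have h2 : (0:ℝ) < Nat.factorial K := by exact_mod_cast Nat.factorial_pos K
    positivity
  -- rewrite numerator
  have hN : ∑ ℓ ∈ Finset.Icc (K - σ) K, (β * K) ^ ℓ / (Nat.factorial ℓ : ℝ)
      = (∑ j ∈ Finset.range (σ+1), rr β j K) * ((β * K) ^ K / (Nat.factorial K : ℝ)) := by
    rw [Finset.sum_mul]
    rw [show Finset.Icc (K - σ) K = Finset.image (fun j => K - j) (Finset.range (σ+1)) from ?_]
    · rw [Finset.sum_image ?inj]
      · apply Finset.sum_congr rfl
        intro j hj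
        have : j ≤ K := le_trans (Nat.lt_succ_iff.1 (Finset.mem_range.1 hj)) hKσ
        exact term_eq hβ hK1 this
      · intro a ha b hb hab
        have ha' : a ≤ K := le_trans (Nat.lt_succ_iff.1 (Finset.mem_range.1 ha)) hKσ
        have hb' : b ≤ K := le_trans (Nat.lt_succ_iff.1 (Finset.mem_range.1 hb)) hKσ
        simp only at hab
        omega
    · ext x
      simp only [Finset.mem_Icc, Finset.mem_image, Finset.mem_range]
      constructor
      · rintro ⟨h1, h2⟩
        exact ⟨K - x, by omega, by omega⟩
      · rintro ⟨j, hj, rfl⟩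
        omega
  -- rewrite denominator
  have hD : ∑ k ∈ Finset.range (K + 1), (β * K) ^ k / (Nat.factorial k : ℝ)
      = (∑' j : ℕ, rr β j K) * ((β * K) ^ K / (Nat.factorial K : ℝ)) := by
    have htsum : (∑' j : ℕ, rr β j K) = ∑ j ∈ Finset.range (K+1), rr β j K := by
      apply tsum_eq_sum
      intro j hj
      exact rr_eq_zero (by simpa [Nat.lt_succ_iff] using Finset.mem_range.not.1 hj |> Nat.lt_of_not_le |> Nat.succ_le_iff.1)
    rw [htsum, Finset.sum_mul]
    rw [← Finset.sum_range_reflect (fun k => (β * K) ^ k / (Nat.factorial k : ℝ)) (K+1)]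
    apply Finset.sum_congr rfl
    intro j hj
    have hj' : j ≤ K := Nat.lt_succ_iff.1 (Finset.mem_range.1 hj)
    have : K + 1 - 1 - j = K - j := by omega
    rw [this]
    exact term_eq hβ hK1 hj'
  simp only [Pi.div_apply]
  rw [hN, hD, mul_div_mul_right _ _ (ne_of_gt htK)]
end

section
/- Let α > 1 and let j be a fixed nonnegative integer. Then, as the integer K → ∞ (with K > j), π_{α,K}(K−j) = ((αK)^{K−j} / (K−j)!) / (∑_{k=0}^{K} (αK)^k / k!) converges to α^{−j}(1 − 1/α). -/
open Filter

noncomputable def gfun (α : ℝ) (K i : ℕ) : ℝ :=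
  ∏ m ∈ Finset.range i, (((K : ℝ) - m) / (α * K))

lemma factor_tendsto (α : ℝ) (hα : 0 < α) (m : ℕ) :
    Tendsto (fun K : ℕ => ((K : ℝ) - m) / (α * K)) atTop (nhds (1 / α)) := by
  have h1 : Tendsto (fun K : ℕ => 1 / α - (m / α) * (1 / (K : ℝ))) atTop
      (nhds (1 / α - (m / α) * 0)) :=
    tendsto_const_nhds.sub (tendsto_const_nhds.mul tendsto_one_div_atTop_nhds_zero_nat)
  rw [mul_zero, sub_zero] at h1
  refine h1.congr' ?_
  filter_upwards [eventually_ge_atTop 1] with K hK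
  have hK0 : (K : ℝ) ≠ 0 := Nat.cast_ne_zero.mpr (by omega)
  field_simp

lemma g_tendsto (α : ℝ) (hα : 0 < α) (i : ℕ) :
    Tendsto (fun K : ℕ => gfun α K i) atTop (nhds ((1 / α) ^ i)) := by
  have : ((1:ℝ) / α) ^ i = ∏ m ∈ Finset.range i, (1 / α) := by simp
  rw [this]
  exact tendsto_finset_prod _ (fun m _ => factor_tendsto α hα m)

lemma g_nonneg (α : ℝ) (hα : 0 < α) {K i : ℕ} (hiK : i ≤ K) : 0 ≤ gfun α K i := by
  refine Finset.prod_nonneg fun m hm => ?_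
  have hm' : m < i := Finset.mem_range.mp hm
  have : (m : ℝ) ≤ K := by exact_mod_cast le_of_lt (lt_of_lt_of_le hm' hiK)
  exact div_nonneg (by linarith) (mul_nonneg hα.le (Nat.cast_nonneg K))

lemma g_le (α : ℝ) (hα : 0 < α) {K i : ℕ} (hK : 1 ≤ K) (hiK : i ≤ K) :
    gfun α K i ≤ (1 / α) ^ i := by
  have h : ((1:ℝ) / α) ^ i = ∏ m ∈ Finset.range i, (1 / α) := by simp
  rw [h, gfun]
  refine Finset.prod_le_prod (fun m hm => ?_) (fun m hm => ?_)
  · have hm' : m < i := Finset.mem_range.mp hm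
    have : (m : ℝ) ≤ K := by exact_mod_cast le_of_lt (lt_of_lt_of_le hm' hiK)
    exact div_nonneg (by linarith) (mul_nonneg hα.le (Nat.cast_nonneg K))
  · have hK0 : (0:ℝ) < K := by exact_mod_cast hK
    rw [div_le_div_iff₀ (by positivity) hα]
    have : (0:ℝ) ≤ m := Nat.cast_nonneg m
    nlinarith

lemma key_id (α : ℝ) (hα : 0 < α) {K : ℕ} (hK : 1 ≤ K) :
    ∀ i ≤ K, ((α * K) ^ (K - i) / (Nat.factorial (K - i) : ℝ)) =
      (α * K) ^ K / (Nat.factorial K : ℝ) * gfun α K i := by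
  intro i
  induction i with
  | zero => simp [gfun]
  | succ i ih =>
    intro hi
    have hiK : i ≤ K := le_of_lt hi
    have hIH := ih hiK
    rw [gfun, Finset.prod_range_succ, ← gfun, ← mul_assoc, ← hIH]
    have h1 : K - i = (K - (i + 1)) + 1 := by omega
    have hfac : (Nat.factorial (K - i) : ℝ) =
        ((K : ℝ) - i) * (Nat.factorial (K - (i + 1)) : ℝ) := by
      rw [h1, Nat.factorial_succ]
      push_cast [Nat.cast_sub (show i + 1 ≤ K by omega)]
      ring
    have hK0 : (0:ℝ) < K := by exact_mod_cast hK
    have hKi : ((K:ℝ) - i) ≠ 0 := by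
      have : (i:ℝ) < K := by exact_mod_cast hi
      linarith
    rw [hfac, h1, pow_succ]
    have hfk : (Nat.factorial (K - (i+1)) : ℝ) ≠ 0 := by
      exact_mod_cast Nat.factorial_ne_zero _
    field_simp

theorem erlang_point_mass_limit (α : ℝ) (hα : 1 < α) (j : ℕ) :
    Tendsto (fun K : ℕ =>
        ((α * K) ^ (K - j) / (Nat.factorial (K - j) : ℝ)) /
          (∑ k ∈ Finset.range (K + 1), (α * K) ^ k / (Nat.factorial k : ℝ)))
      atTop (nhds ((1 / α ^ j) * (1 - 1 / α))) := by
  have hα0 : 0 < α := lt_trans zero_lt_one hα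
  have hr0 : (0:ℝ) ≤ 1 / α := by positivity
  have hr1 : 1 / α < 1 := (div_lt_one hα0).mpr hα
  set F : ℕ → ℕ → ℝ := fun K i => if i ≤ K then gfun α K i else 0 with hF
  have hbound : Summable (fun i : ℕ => (1 / α) ^ i) :=
    summable_geometric_of_lt_one hr0 hr1
  have hsum : Tendsto (fun K : ℕ => ∑' i, F K i) atTop (nhds (∑' i, (1 / α) ^ i)) := by
    apply tendsto_tsum_of_dominated_convergence hbound
    · intro k
      refine (g_tendsto α hα0 k).congr' ?_
      filter_upwards [eventually_ge_atTop k] with K hK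
      simp [hF, hK]
    · filter_upwards [eventually_ge_atTop 1] with K hK k
      by_cases h : k ≤ K
      · simp only [hF, if_pos h, Real.norm_eq_abs, abs_of_nonneg (g_nonneg α hα0 h)]
        exact g_le α hα0 hK h
      · simp only [hF, if_neg h, norm_zero]
        positivity
  have hnum : Tendsto (fun K : ℕ => gfun α K j) atTop (nhds ((1 / α) ^ j)) :=
    g_tendsto α hα0 j
  have hgeo : (∑' i : ℕ, (1 / α) ^ i) = (1 - 1 / α)⁻¹ :=
    tsum_geometric_of_lt_one hr0 hr1
  have hne : (∑' i : ℕ, (1 / α) ^ i) ≠ 0 := by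
    rw [hgeo]
    have : (0:ℝ) < 1 - 1 / α := by linarith
    positivity
  have hmain := hnum.div hsum hne
  have hval : (1 / α) ^ j / (∑' i : ℕ, (1 / α) ^ i) = (1 / α ^ j) * (1 - 1 / α) := by
    rw [hgeo, division_def, inv_inv, one_div_pow]
  rw [hval] at hmain
  refine hmain.congr' ?_
  filter_upwards [eventually_ge_atTop (max j 1)] with K hK
  have hj : j ≤ K := le_trans (le_max_left _ _) hK
  have h1 : 1 ≤ K := le_trans (le_max_right _ _) hK
  have hK0 : (0:ℝ) < K := by exact_mod_cast h1
  have hfK : (0:ℝ) < (Nat.factorial K : ℝ) := by exact_mod_cast Nat.factorial_pos K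
  have haK : (0:ℝ) < (α * K) ^ K / (Nat.factorial K : ℝ) := by positivity
  have htsum : (∑' i, F K i) = ∑ i ∈ Finset.range (K + 1), gfun α K i := by
    rw [tsum_eq_sum (s := Finset.range (K + 1))
      (fun b hb => by
        have : K < b := by simpa [Nat.lt_succ_iff] using Finset.mem_range.not.mp hb
        simp [hF, Nat.not_le.mpr this])]
    exact Finset.sum_congr rfl fun i hi => by
      simp [hF, Nat.lt_succ_iff.mp (Finset.mem_range.mp hi)]
  have hrefl : ∑ k ∈ Finset.range (K + 1), (α * K) ^ k / (Nat.factorial k : ℝ)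
      = ∑ i ∈ Finset.range (K + 1), (α * K) ^ (K - i) / (Nat.factorial (K - i) : ℝ) := by
    rw [← Finset.sum_range_reflect]
    simp
  have hden : ∑ i ∈ Finset.range (K + 1), (α * K) ^ (K - i) / (Nat.factorial (K - i) : ℝ)
      = (α * K) ^ K / (Nat.factorial K : ℝ) * ∑ i ∈ Finset.range (K + 1), gfun α K i := by
    rw [Finset.mul_sum]
    exact Finset.sum_congr rfl fun i hi =>
      key_id α hα0 h1 i (Nat.lt_succ_iff.mp (Finset.mem_range.mp hi))
  simp only [Pi.div_apply]
  rw [htsum, key_id α hα0 h1 j hj, hrefl, hden,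
    mul_div_mul_left _ _ (ne_of_gt haK)]
end

section
/- Fix a positive integer ρ. There exists a unique real polynomial P_ρ such that (1−x)·P_ρ(x) = x(1 − (1 − (1−x)²)^ρ) for all real x; in particular the function f_ρ(x) := x(1 − (1 − (1−x)²)^ρ)/(1−x) (for x ≠ 1, with f_ρ(1) := 0) is a polynomial, hence smooth. Moreover there exists a unique x_ρ ∈ [0,1] with P_ρ′(x_ρ) = 0. -/
open Polynomial Finset

noncomputable def Paux (m : ℕ) : Polynomial ℝ :=
  X * (1 - X) * ∑ k ∈ Finset.range (m+1), (X * (2 - X))^k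

def Sfun (m : ℕ) (x : ℝ) : ℝ := ∑ k ∈ Finset.range (m+1), (x*(2-x))^k

def Dfun (m : ℕ) (x : ℝ) : ℝ := Sfun m x - 2*((m:ℝ)+1)*x*(x*(2-x))^m

lemma Paux_eval (m : ℕ) (x : ℝ) : (Paux m).eval x = x * (1-x) * Sfun m x := by
  simp [Paux, Sfun, Polynomial.eval_finset_sum]

lemma Paux_identity (m : ℕ) (x : ℝ) :
    (1 - x) * (Paux m).eval x = x * (1 - (1 - (1 - x) ^ 2) ^ (m+1)) := by
  rw [Paux_eval]
  have hg : (∑ k ∈ Finset.range (m+1), (x*(2-x))^k) * ((x*(2-x)) - 1)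
      = (x*(2-x))^(m+1) - 1 := geom_sum_mul _ _
  have hS : Sfun m x = ∑ k ∈ Finset.range (m+1), (x*(2-x))^k := rfl
  rw [hS]
  have ht : (1 : ℝ) - (1-x)^2 = x*(2-x) := by ring
  rw [ht]
  linear_combination (-x) * hg

lemma telescope (m : ℕ) (t : ℝ) :
    (∑ k ∈ Finset.range (m+1), t^k)
      - (1 - t) * (∑ k ∈ Finset.range (m+1), (k:ℝ) * t^(k-1)) = ((m:ℝ)+1) * t^m := by
  induction m with
  | zero => simp
  | succ n ih =>
    rw [Finset.sum_range_succ, Finset.sum_range_succ (f := fun k => (k:ℝ) * t^(k-1))]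
    rw [show (n+1-1) = n from rfl]
    push_cast
    push_cast at ih
    linear_combination ih

lemma Paux_deriv (m : ℕ) (x : ℝ) :
    (Polynomial.derivative (Paux m)).eval x = Dfun m x := by
  have hP : HasDerivAt (fun y : ℝ => (Paux m).eval y)
      ((Polynomial.derivative (Paux m)).eval x) x := (Paux m).hasDerivAt x
  have ht : HasDerivAt (fun y : ℝ => y*(2-y)) (2-2*x) x := by
    have := (hasDerivAt_id x).fun_mul ((hasDerivAt_const x (2:ℝ)).fun_sub (hasDerivAt_id x))
    refine this.congr_deriv ?_
    simp only [id]
    ring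
  have hS : HasDerivAt (fun y : ℝ => Sfun m y)
      (∑ k ∈ Finset.range (m+1), (k:ℝ) * (x*(2-x))^(k-1) * (2-2*x)) x := by
    simp only [Sfun]
    exact HasDerivAt.fun_sum fun k _ => ht.pow k
  have h1 : HasDerivAt (fun y : ℝ => y*(1-y)) (1-2*x) x := by
    have := (hasDerivAt_id x).fun_mul ((hasDerivAt_const x (1:ℝ)).fun_sub (hasDerivAt_id x))
    refine this.congr_deriv ?_
    simp only [id]
    ring
  have hq : HasDerivAt (fun y : ℝ => y*(1-y) * Sfun m y)
      ((1-2*x) * Sfun m x + (x*(1-x)) *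
        (∑ k ∈ Finset.range (m+1), (k:ℝ) * (x*(2-x))^(k-1) * (2-2*x))) x := h1.mul hS
  have hfun : (fun y : ℝ => (Paux m).eval y) = fun y : ℝ => y*(1-y) * Sfun m y := by
    funext y; exact Paux_eval m y
  rw [hfun] at hP
  have huniq := hP.unique hq
  rw [huniq]
  have htel := telescope m (x*(2-x))
  have hsum : (∑ k ∈ Finset.range (m+1), (k:ℝ) * (x*(2-x))^(k-1) * (2-2*x))
      = (∑ k ∈ Finset.range (m+1), (k:ℝ) * (x*(2-x))^(k-1)) * (2-2*x) := by
    rw [Finset.sum_mul]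
  rw [hsum]
  have hS' : Sfun m x = ∑ k ∈ Finset.range (m+1), (x*(2-x))^k := rfl
  simp only [Dfun]
  rw [hS']
  linear_combination (-2*x) * htel

lemma Dfun_zero (m : ℕ) : Dfun m 0 = 1 := by
  simp [Dfun, Sfun, Finset.sum_range_succ', pow_succ]

lemma Dfun_one (m : ℕ) : Dfun m 1 = -((m:ℝ)+1) := by
  have h : Sfun m 1 = (m:ℝ)+1 := by unfold Sfun; norm_num
  unfold Dfun
  rw [h]
  ring

lemma Dfun_continuous (m : ℕ) : Continuous (Dfun m) := by
  unfold Dfun Sfun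
  exact (continuous_finset_sum _ fun i _ => by fun_prop).sub (by fun_prop)

lemma Dfun_neg_after (m : ℕ) {x1 x2 : ℝ} (h0 : 0 < x1) (h12 : x1 < x2) (h2 : x2 ≤ 1)
    (hroot : Dfun m x1 = 0) : Dfun m x2 < 0 := by
  set t1 := x1*(2-x1) with ht1def
  set t2 := x2*(2-x2) with ht2def
  have hx1lt1 : x1 < 1 := lt_of_lt_of_le h12 h2
  have ht1 : 0 < t1 := by rw [ht1def]; nlinarith
  have ht12 : t1 < t2 := by rw [ht1def, ht2def]; nlinarith
  have ht2 : 0 < t2 := lt_trans ht1 ht12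
  have key : x1 * t1^m * Sfun m x2 < x2 * t2^m * Sfun m x1 := by
    simp only [Sfun, ← ht1def, ← ht2def, Finset.mul_sum]
    apply Finset.sum_lt_sum_of_nonempty (Finset.nonempty_range_add_one)
    intro k hk
    have hkm : k ≤ m := Nat.lt_succ_iff.mp (Finset.mem_range.mp hk)
    have e1 : t1^m = t1^(m-k) * t1^k := by rw [← pow_add, Nat.sub_add_cancel hkm]
    have e2 : t2^m = t2^(m-k) * t2^k := by rw [← pow_add, Nat.sub_add_cancel hkm]
    have hle : t1^(m-k) ≤ t2^(m-k) := pow_le_pow_left₀ ht1.le ht12.le _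
    have h2pos : 0 < t2^m * t1^k := by positivity
    calc x1 * t1^m * t2^k = x1 * (t1^(m-k) * (t1^k * t2^k)) := by rw [e1]; ring
      _ ≤ x1 * (t2^(m-k) * (t1^k * t2^k)) := by
          apply mul_le_mul_of_nonneg_left _ h0.le
          exact mul_le_mul_of_nonneg_right hle (by positivity)
      _ = x1 * (t2^m * t1^k) := by rw [e2]; ring
      _ < x2 * (t2^m * t1^k) := mul_lt_mul_of_pos_right h12 h2pos
      _ = x2 * t2^m * t1^k := by ring
  have hS1 : Sfun m x1 = 2*((m:ℝ)+1)*x1*t1^m := by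
    have := hroot
    simp only [Dfun, ← ht1def] at this
    linarith
  have expand : x1*t1^m * Dfun m x2
      = x1*t1^m * Sfun m x2 - x2*t2^m * Sfun m x1 := by
    simp only [Dfun, ← ht2def]
    linear_combination (x2*t2^m) * hS1
  have hlt : x1*t1^m * Dfun m x2 < 0 := by
    rw [expand]; linarith
  have hpos : 0 < x1*t1^m := by positivity
  by_contra hcon
  push_neg at hcon
  nlinarith

lemma Dfun_unique_root (m : ℕ) :
    ∃! x : ℝ, x ∈ Set.Icc (0:ℝ) 1 ∧ Dfun m x = 0 := by
  have hmem : (0:ℝ) ∈ Set.Icc (Dfun m 1) (Dfun m 0) := by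
    rw [Dfun_zero, Dfun_one]
    constructor
    · have : (0:ℝ) ≤ (m:ℝ) + 1 := by positivity
      linarith
    · norm_num
  obtain ⟨c, hc, hc0⟩ := intermediate_value_Icc' (by norm_num : (0:ℝ) ≤ 1)
    (Dfun_continuous m).continuousOn hmem
  have uniq : ∀ a b : ℝ, a ∈ Set.Icc (0:ℝ) 1 → b ∈ Set.Icc (0:ℝ) 1 →
      Dfun m a = 0 → Dfun m b = 0 → a = b := by
    intro a b ha hb hDa hDb
    have hane : a ≠ 0 := by
      intro h; rw [h, Dfun_zero] at hDa; norm_num at hDa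
    have hbne : b ≠ 0 := by
      intro h; rw [h, Dfun_zero] at hDb; norm_num at hDb
    rcases lt_trichotomy a b with h | h | h
    · exact absurd hDb (ne_of_lt (Dfun_neg_after m (lt_of_le_of_ne ha.1 (Ne.symm hane)) h hb.2 hDa))
    · exact h
    · exact absurd hDa (ne_of_lt (Dfun_neg_after m (lt_of_le_of_ne hb.1 (Ne.symm hbne)) h ha.2 hDb))
  exact ⟨c, ⟨hc, hc0⟩, fun y hy => uniq y c hy.1 hc hy.2 hc0⟩

lemma poly_unique (m : ℕ) (P Q : Polynomial ℝ)
    (hP : ∀ x : ℝ, (1 - x) * P.eval x = x * (1 - (1 - (1 - x) ^ 2) ^ (m+1)))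
    (hQ : ∀ x : ℝ, (1 - x) * Q.eval x = x * (1 - (1 - (1 - x) ^ 2) ^ (m+1))) :
    P = Q := by
  have hz : (1 - X : Polynomial ℝ) * (P - Q) = 0 := by
    apply Polynomial.funext
    intro x
    simp only [Polynomial.eval_mul, Polynomial.eval_sub, Polynomial.eval_one,
      Polynomial.eval_X, Polynomial.eval_zero]
    have := hP x
    have := hQ x
    nlinarith [hP x, hQ x]
  rcases mul_eq_zero.mp hz with h | h
  · exfalso
    have := congrArg (Polynomial.eval 0) h
    simp at this
  · exact sub_eq_zero.mp h

theorem retry_rate_polynomial_and_unique_stationary_point (ρ : ℕ) (hρ : 1 ≤ ρ) :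
    (∃! P : Polynomial ℝ, ∀ x : ℝ,
        (1 - x) * P.eval x = x * (1 - (1 - (1 - x) ^ 2) ^ ρ)) ∧
    ∀ P : Polynomial ℝ,
      (∀ x : ℝ, (1 - x) * P.eval x = x * (1 - (1 - (1 - x) ^ 2) ^ ρ)) →
      ∃! x : ℝ, x ∈ Set.Icc (0:ℝ) 1 ∧ (Polynomial.derivative P).eval x = 0 := by
  obtain ⟨m, rfl⟩ : ∃ m, ρ = m + 1 := ⟨ρ - 1, (Nat.succ_pred_eq_of_pos hρ).symm⟩
  constructor
  · exact ⟨Paux m, Paux_identity m, fun Q hQ => poly_unique m Q (Paux m) hQ (Paux_identity m)⟩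
  · intro P hP
    have hPeq : P = Paux m := poly_unique m P (Paux m) hP (Paux_identity m)
    subst hPeq
    simpa only [Paux_deriv] using Dfun_unique_root m
end

section
/- Fix a positive integer ρ, let P_ρ be the unique real polynomial with (1−x)·P_ρ(x) = x(1 − (1 − (1−x)²)^ρ) for all real x, and let x_ρ be the unique point of [0,1] with P_ρ′(x_ρ) = 0. Then x_ρ ∈ [1/2, 1) and P_ρ attains its maximum over [0,1] at x_ρ. -/
open Polynomial Finset in
private lemma aux_deriv_poly (ρ m : ℕ) (hm : ρ = m + 1) (P : Polynomial ℝ)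
    (hP : ∀ x : ℝ, (1 - x) * P.eval x = x * (1 - (1 - (1 - x) ^ 2) ^ ρ)) :
    Polynomial.derivative P =
      (∑ k ∈ Finset.range ρ, (1 - (1 - X)^2)^k) - C 2 * C (ρ:ℝ) * X * (1 - (1-X)^2)^m := by
  set u : Polynomial ℝ := 1 - (1 - X)^2 with hu
  have hP' : (1 - X) * P = X * (1 - u^ρ) := by
    apply Polynomial.funext
    intro x
    simp [hu, hP x]
  have hS : (1 - X)^2 * (∑ k ∈ Finset.range ρ, u^k) = 1 - u^ρ := by
    have := geom_sum_mul u ρ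
    have h1 : (1 - X)^2 = 1 - u := by ring
    rw [h1]
    linear_combination -this
  have h1X : ((1 - X : Polynomial ℝ))^2 ≠ 0 := by
    apply pow_ne_zero
    intro h
    have := congrArg (eval 0) h
    simp at this
  apply mul_left_cancel₀ h1X
  have hd := congrArg Polynomial.derivative hP'
  subst hm
  rw [hu] at hd
  simp only [Polynomial.derivative_mul, Polynomial.derivative_sub, Polynomial.derivative_pow,
    Polynomial.derivative_one, Polynomial.derivative_X, Nat.add_sub_cancel] at hd
  rw [hu] at hP' ⊢
  rw [hu] at hS
  push_cast at hd ⊢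
  linear_combination (1 - (X:Polynomial ℝ)) * hd + hP' - hS

open Finset in
private lemma aux_factor (ρ m : ℕ) (hm : ρ = m + 1) (x : ℝ) (hx0 : 0 < x) (hx1 : x ≤ 1) :
    (∑ k ∈ Finset.range ρ, (1 - (1 - x)^2)^k) - 2*ρ*x*(1 - (1 - x)^2)^m
      = (1 - (1 - x)^2)^m * ((∑ j ∈ Finset.range ρ, ((1 - (1 - x)^2)⁻¹)^j) - 2*ρ*x) := by
  set u : ℝ := 1 - (1 - x)^2 with hu
  have hupos : 0 < u := by rw [hu]; nlinarith
  have hune : u ≠ 0 := ne_of_gt hupos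
  rw [mul_sub, Finset.mul_sum]
  have h1 : ∀ j ∈ Finset.range ρ, u^m * (u⁻¹)^j = u^(m-j) := by
    intro j hj
    rw [Finset.mem_range, hm] at hj
    rw [inv_pow, ← pow_sub₀ u hune (Nat.lt_succ_iff.mp hj)]
  rw [Finset.sum_congr rfl h1, hm]
  have h2 := Finset.sum_range_reflect (fun k => u^k) (m+1)
  simp only [Nat.add_sub_cancel] at h2
  rw [h2]
  ring

private lemma aux_phi_anti (ρ : ℕ) (hρ : 1 ≤ ρ) (a b : ℝ) (ha : 0 < a) (hab : a < b) (hb : b ≤ 1) :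
    (∑ j ∈ Finset.range ρ, ((1 - (1 - b)^2)⁻¹)^j) - 2*ρ*b
      < (∑ j ∈ Finset.range ρ, ((1 - (1 - a)^2)⁻¹)^j) - 2*ρ*a := by
  have hua : 0 < 1 - (1 - a)^2 := by nlinarith
  have hub : 0 < 1 - (1 - b)^2 := by nlinarith
  have huab : 1 - (1 - a)^2 < 1 - (1 - b)^2 := by nlinarith
  have hinv : (1 - (1 - b)^2)⁻¹ ≤ (1 - (1 - a)^2)⁻¹ :=
    inv_anti₀ hua (le_of_lt huab)
  have hsum : (∑ j ∈ Finset.range ρ, ((1 - (1 - b)^2)⁻¹)^j)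
      ≤ ∑ j ∈ Finset.range ρ, ((1 - (1 - a)^2)⁻¹)^j := by
    apply Finset.sum_le_sum
    intro j _
    exact pow_le_pow_left₀ (le_of_lt (inv_pos.mpr hub)) hinv j
  have hρ' : (1:ℝ) ≤ ρ := by exact_mod_cast hρ
  nlinarith

theorem retry_rate_stationary_point_location (ρ : ℕ) (hρ : 1 ≤ ρ)
    (P : Polynomial ℝ)
    (hP : ∀ x : ℝ, (1 - x) * P.eval x = x * (1 - (1 - (1 - x) ^ 2) ^ ρ))
    (xρ : ℝ) (hxρ : xρ ∈ Set.Icc (0:ℝ) 1)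
    (hstat : (Polynomial.derivative P).eval xρ = 0) :
    xρ ∈ Set.Ico (1/2 : ℝ) 1 ∧ ∀ y ∈ Set.Icc (0:ℝ) 1, P.eval y ≤ P.eval xρ := by
  obtain ⟨m, hm⟩ : ∃ m, ρ = m + 1 := ⟨ρ - 1, (Nat.succ_pred_eq_of_pos hρ).symm⟩
  have hρ' : (1:ℝ) ≤ ρ := by exact_mod_cast hρ
  -- the evaluated derivative
  have hD : ∀ x : ℝ, (Polynomial.derivative P).eval x =
      (∑ k ∈ Finset.range ρ, (1 - (1 - x)^2)^k) - 2*ρ*x*(1 - (1 - x)^2)^m := by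
    intro x
    rw [aux_deriv_poly ρ m hm P hP]
    simp [Polynomial.eval_finset_sum]
  obtain ⟨hxρ0, hxρ1⟩ := hxρ
  -- xρ < 1
  have hx1 : xρ < 1 := by
    rcases lt_or_eq_of_le hxρ1 with h | h
    · exact h
    · exfalso
      have := hstat
      rw [hD, h] at this
      simp at this
      linarith
  -- xρ > 0
  have hx0 : 0 < xρ := by
    rcases lt_or_eq_of_le hxρ0 with h | h
    · exact h
    · exfalso
      have := hstat
      rw [hD, ← h] at this
      rw [hm] at this
      rw [Finset.sum_range_succ'] at this
      simp at this
  -- φ xρ = 0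
  have hφ0 : (∑ j ∈ Finset.range ρ, ((1 - (1 - xρ)^2)⁻¹)^j) - 2*ρ*xρ = 0 := by
    have h1 := hstat
    rw [hD, aux_factor ρ m hm xρ hx0 (le_of_lt hx1)] at h1
    have hupos : (0:ℝ) < 1 - (1 - xρ)^2 := by nlinarith
    have := mul_eq_zero.mp h1
    rcases this with h | h
    · exact absurd h (pow_ne_zero m (ne_of_gt hupos))
    · exact h
  -- xρ ≥ 1/2
  have hhalf : (1/2 : ℝ) ≤ xρ := by
    by_contra h
    push_neg at h
    have hupos : (0:ℝ) < 1 - (1 - xρ)^2 := by nlinarith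
    have hule : (1 - (1 - xρ)^2) ≤ 1 := by nlinarith
    have hinv : 1 ≤ (1 - (1 - xρ)^2)⁻¹ := by
      nlinarith [mul_nonneg (sub_nonneg.mpr hule) (le_of_lt (inv_pos.mpr hupos)),
        mul_inv_cancel₀ (ne_of_gt hupos)]
    have hsum : (ρ:ℝ) ≤ ∑ j ∈ Finset.range ρ, ((1 - (1 - xρ)^2)⁻¹)^j := by
      calc (ρ:ℝ) = ∑ _j ∈ Finset.range ρ, (1:ℝ) := by simp
        _ ≤ _ := Finset.sum_le_sum (fun j _ => one_le_pow₀ hinv)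
    nlinarith
  refine ⟨⟨hhalf, hx1⟩, ?_⟩
  -- derivative sign
  have hpos : ∀ y : ℝ, 0 < y → y < xρ → 0 ≤ (Polynomial.derivative P).eval y := by
    intro y hy0 hy1
    rw [hD, aux_factor ρ m hm y hy0 (le_of_lt (lt_trans hy1 hx1))]
    have hupos : (0:ℝ) < 1 - (1 - y)^2 := by nlinarith
    have hφ := aux_phi_anti ρ hρ y xρ hy0 hy1 (le_of_lt hx1)
    rw [hφ0] at hφ
    positivity
  have hneg : ∀ y : ℝ, xρ < y → y ≤ 1 → (Polynomial.derivative P).eval y ≤ 0 := by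
    intro y hy1 hy2
    rw [hD, aux_factor ρ m hm y (lt_trans hx0 hy1) hy2]
    have hupos : (0:ℝ) < 1 - (1 - y)^2 := by nlinarith
    have hφ := aux_phi_anti ρ hρ xρ y hx0 hy1 hy2
    rw [hφ0] at hφ
    have := pow_pos hupos m
    nlinarith
  -- monotone on [0, xρ]
  have hmono : MonotoneOn (fun x => P.eval x) (Set.Icc 0 xρ) := by
    apply monotoneOn_of_deriv_nonneg (convex_Icc 0 xρ)
      (P.continuous.continuousOn) ((P.differentiable).differentiableOn)
    intro y hy
    rw [interior_Icc] at hy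
    rw [Polynomial.deriv]
    exact hpos y hy.1 hy.2
  have hanti : AntitoneOn (fun x => P.eval x) (Set.Icc xρ 1) := by
    apply antitoneOn_of_deriv_nonpos (convex_Icc xρ 1)
      (P.continuous.continuousOn) ((P.differentiable).differentiableOn)
    intro y hy
    rw [interior_Icc] at hy
    rw [Polynomial.deriv]
    exact hneg y hy.1 (le_of_lt hy.2)
  intro y hy
  rcases le_total y xρ with h | h
  · exact hmono ⟨hy.1, h⟩ ⟨hxρ0, le_refl _⟩ h
  · exact hanti ⟨le_refl _, le_of_lt hx1⟩ ⟨h, hy.2⟩ h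
end

section
/- Let ρ be a positive integer and let α > 1. Then the equation x(1 − 2(1 − (1−x)²)^ρ) + 1 − 1/α = 0 has exactly one solution x in the open interval (0,1). -/
theorem unique_solution_supercritical (ρ : ℕ) (hρ : 1 ≤ ρ) (α : ℝ) (hα : 1 < α) :
    ∃! x : ℝ, x ∈ Set.Ioo (0:ℝ) 1 ∧
      x * (1 - 2 * (1 - (1 - x) ^ 2) ^ ρ) + 1 - 1 / α = 0 := by
  have hα0 : (0:ℝ) < α := lt_trans one_pos hα
  set c : ℝ := 1 - 1 / α with hc
  have hc0 : 0 < c := by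
    have : 1 / α < 1 := by rw [div_lt_one hα0]; exact hα
    simp only [hc]; linarith
  have hc1 : c < 1 := by
    have : 0 < 1 / α := by positivity
    simp only [hc]; linarith
  set f : ℝ → ℝ := fun x => 2 * x * (x * (2 - x)) ^ ρ - x with hf
  -- the original equation is equivalent to f x = c
  have hiff : ∀ x : ℝ,
      (x * (1 - 2 * (1 - (1 - x) ^ 2) ^ ρ) + 1 - 1 / α = 0) ↔ f x = c := by
    intro x
    have hb : 1 - (1 - x) ^ 2 = x * (2 - x) := by ring
    rw [hb]
    have : x * (1 - 2 * (x * (2 - x)) ^ ρ) + 1 - 1 / α = c - f x := by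
      simp only [hf, hc]; ring
    rw [this]
    constructor <;> intro h <;> linarith
  have hcont : Continuous f := by
    simp only [hf]; continuity
  -- derivative
  have hderiv : ∀ x : ℝ, HasDerivAt f
      (2 * (x * (2 - x)) ^ ρ + 2 * x * ((ρ:ℝ) * (x * (2 - x)) ^ (ρ - 1) * (2 - 2 * x)) - 1) x := by
    intro x
    have hg : HasDerivAt (fun x : ℝ => x * (2 - x)) (2 - 2 * x) x := by
      have h1 : HasDerivAt (fun x : ℝ => x) 1 x := hasDerivAt_id x
      have h2 : HasDerivAt (fun x : ℝ => 2 - x) (-1) x := by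
        simpa using (hasDerivAt_id x).const_sub 2
      have := h1.mul h2
      exact this.congr_deriv (by ring)
    have hgp : HasDerivAt (fun x : ℝ => (x * (2 - x)) ^ ρ)
        ((ρ:ℝ) * (x * (2 - x)) ^ (ρ - 1) * (2 - 2 * x)) x := hg.pow ρ
    have h2x : HasDerivAt (fun x : ℝ => 2 * x) 2 x := by
      simpa using (hasDerivAt_id x).const_mul 2
    have hmul := h2x.mul hgp
    have := hmul.sub (hasDerivAt_id x)
    exact this.congr_deriv (by ring)
  -- strict monotonicity on [a,b] for roots a < b
  have key : ∀ a b : ℝ, a ∈ Set.Ioo (0:ℝ) 1 → b ∈ Set.Ioo (0:ℝ) 1 →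
      f a = c → f b = c → ¬ a < b := by
    intro a b ha hb hfa hfb hab
    obtain ⟨ha0, ha1⟩ := ha
    obtain ⟨hb0, hb1⟩ := hb
    -- at root a, 2 * (a*(2-a))^ρ - 1 > 0
    have hua : 1 < 2 * (a * (2 - a)) ^ ρ := by
      by_contra h
      push_neg at h
      have : f a ≤ 0 := by
        simp only [hf]
        nlinarith
      linarith
    have hmono : StrictMonoOn f (Set.Icc a b) := by
      apply strictMonoOn_of_deriv_pos (convex_Icc a b) hcont.continuousOn
      intro x hx
      rw [interior_Icc] at hx
      obtain ⟨hax, hxb⟩ := hx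
      rw [(hderiv x).deriv]
      have hx0 : 0 < x := lt_trans ha0 hax
      have hx1 : x < 1 := lt_trans hxb hb1
      -- base monotone: a*(2-a) < x*(2-x)
      have hbase : a * (2 - a) < x * (2 - x) := by nlinarith
      have hbnn : (0:ℝ) ≤ a * (2 - a) := by nlinarith
      have hpow : (a * (2 - a)) ^ ρ < (x * (2 - x)) ^ ρ := by
        apply pow_lt_pow_left₀ hbase hbnn
        omega
      have hxnn : (0:ℝ) ≤ x * (2 - x) := by nlinarith
      have hmid : 0 ≤ 2 * x * ((ρ:ℝ) * (x * (2 - x)) ^ (ρ - 1) * (2 - 2 * x)) := by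
        apply mul_nonneg (by linarith)
        apply mul_nonneg (mul_nonneg (Nat.cast_nonneg ρ) (pow_nonneg hxnn _))
        linarith
      nlinarith
    have : f a < f b := hmono (Set.left_mem_Icc.2 hab.le) (Set.right_mem_Icc.2 hab.le) hab
    rw [hfa, hfb] at this
    exact lt_irrefl c this
  -- existence via IVT
  have hf0 : f 0 = 0 := by simp [hf]
  have hf1 : f 1 = 1 := by norm_num [hf]
  have hsub : Set.Ioo (f 0) (f 1) ⊆ f '' Set.Ioo 0 1 :=
    intermediate_value_Ioo (by norm_num) hcont.continuousOn
  have hmem : c ∈ Set.Ioo (f 0) (f 1) := by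
    rw [hf0, hf1]; exact ⟨hc0, hc1⟩
  obtain ⟨x₀, hx₀, hfx₀⟩ := hsub hmem
  refine ⟨x₀, ⟨hx₀, (hiff x₀).2 hfx₀⟩, ?_⟩
  rintro y ⟨hy, hey⟩
  have hfy : f y = c := (hiff y).1 hey
  rcases lt_trichotomy y x₀ with h | h | h
  · exact absurd h (key y x₀ hy hx₀ hfy hfx₀)
  · exact h
  · exact absurd h (key x₀ y hx₀ hy hfx₀ hfy)
end

section
/- Let α_c := (5√10 − 13)/3 and let α satisfy α_c < α ≤ 1. Then there exists δ ∈ (0, 1/2) such that 1 − 1/(α(1 + 2δ(1−δ))) > δ. -/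
theorem exists_delta_interim (α : ℝ) (hα : (5 * Real.sqrt 10 - 13) / 3 < α)
    (hα1 : α ≤ 1) :
    ∃ δ ∈ Set.Ioo (0:ℝ) (1/2), 1 - 1 / (α * (1 + 2 * δ * (1 - δ))) > δ := by
  have hs : Real.sqrt 10 ^ 2 = 10 := Real.sq_sqrt (by norm_num)
  have hs3 : 3 < Real.sqrt 10 := by nlinarith [Real.sqrt_nonneg 10]
  have hs4 : Real.sqrt 10 < 4 := by nlinarith [Real.sqrt_nonneg 10]
  set δ : ℝ := (4 - Real.sqrt 10) / 6 with hδ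
  have hδ0 : 0 < δ := by simp [hδ]; linarith
  have hδh : δ < 1/2 := by rw [hδ]; linarith
  refine ⟨δ, ⟨hδ0, hδh⟩, ?_⟩
  have hα0 : 0 < α := by nlinarith
  have hX : 0 < α * (1 + 2 * δ * (1 - δ)) := by
    apply mul_pos hα0; nlinarith
  have key : 1 / (α * (1 + 2 * δ * (1 - δ))) < 1 - δ := by
    rw [div_lt_iff₀ hX]
    have h1 : (0:ℝ) < (13 + 5 * Real.sqrt 10) / 27 := by nlinarith
    have h2 := mul_lt_mul_of_pos_right hα h1
    have hid : (1 - δ) * (1 + 2 * δ * (1 - δ)) = (13 + 5 * Real.sqrt 10) / 27 := by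
      rw [hδ]; linear_combination (-Real.sqrt 10/108) * hs
    have h3 : (1 - δ) * (α * (1 + 2 * δ * (1 - δ))) = α * ((13 + 5 * Real.sqrt 10) / 27) := by
      rw [← hid]; ring
    rw [h3]
    nlinarith [hs, h2]
  linarith
end

section
/- Fix a positive integer ρ and define the polynomial P_ρ(x) := x(1 − 2(1 − (1−x)²)^ρ). Then P_ρ has a unique stationary point x* in the open interval (0,1) (i.e. a unique x* ∈ (0,1) with P_ρ′(x*) = 0), and P_ρ attains its maximum over [0,1] at x*. -/
open Set Real

noncomputable def Gg (n : ℕ) (y : ℝ) : ℝ :=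
  2 * y ^ (n + 1) * (2 - y) ^ n * ((2 * n + 4) - (2 * n + 3) * y)

noncomputable def Dg (n : ℕ) (y : ℝ) : ℝ :=
  2 * ((n + 1) * y ^ n * (2 - y) ^ n * ((2 * n + 4) - (2 * n + 3) * y)
    - (n : ℝ) * y ^ (n + 1) * (2 - y) ^ (n - 1) * ((2 * n + 4) - (2 * n + 3) * y)
    - (2 * n + 3) * y ^ (n + 1) * (2 - y) ^ n)

noncomputable def cc (n : ℕ) : ℝ := ((2 * n + 4) - Real.sqrt (2 * n + 4)) / (2 * n + 3)
noncomputable def dd (n : ℕ) : ℝ := ((2 * n + 4) + Real.sqrt (2 * n + 4)) / (2 * n + 3)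

lemma hasDerivAt_f (n : ℕ) (y : ℝ) :
    HasDerivAt (fun z : ℝ => z * (1 - 2 * (1 - (1 - z) ^ 2) ^ (n + 1))) (1 - Gg n y) y := by
  have hq : HasDerivAt (fun z : ℝ => 1 - (1 - z) ^ 2)
      (-(2 * (1 - y) ^ 1 * (-1))) y := (((hasDerivAt_id' y).const_sub 1).fun_pow 2).const_sub 1
  have h := (hasDerivAt_id' y).fun_mul (((hq.fun_pow (n + 1)).const_mul 2).const_sub 1)
  refine h.congr_deriv ?_
  simp only [Nat.add_sub_cancel, pow_one]
  rw [show (1:ℝ) - (1 - y) ^ 2 = y * (2 - y) from by ring]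
  simp only [Gg, mul_pow]
  push_cast
  ring

lemma hasDerivAt_Gg (n : ℕ) (y : ℝ) : HasDerivAt (Gg n) (Dg n y) y := by
  have hA : HasDerivAt (fun y : ℝ => y ^ (n + 1)) (((n:ℝ) + 1) * y ^ n) y := by
    simpa using hasDerivAt_pow (n + 1) y
  have hB : HasDerivAt (fun y : ℝ => (2 - y) ^ n) ((n : ℝ) * (2 - y) ^ (n - 1) * (-1)) y := by
    simpa using ((hasDerivAt_id' y).const_sub 2).fun_pow n
  have hC : HasDerivAt (fun y : ℝ => (2 * (n:ℝ) + 4) - (2 * (n:ℝ) + 3) * y) (-(2 * (n:ℝ) + 3)) y := by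
    simpa using ((hasDerivAt_id' y).const_mul (2 * (n:ℝ) + 3)).const_sub (2 * (n:ℝ) + 4)
  have h := ((hA.fun_mul hB).fun_mul hC).const_mul (2:ℝ)
  have hfun : Gg n = fun y : ℝ => 2 * (y ^ (n+1) * (2 - y) ^ n * ((2 * (n:ℝ) + 4) - (2 * (n:ℝ) + 3) * y)) := by
    funext z; simp only [Gg]; ring
  rw [hfun]
  refine h.congr_deriv ?_
  simp only [Dg]
  ring

lemma key_id_s19 (n : ℕ) (y : ℝ) :
    (2 - y) * Dg n y
      = 4 * (n + 1) * y ^ n * (2 - y) ^ n *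
        ((2 * n + 3) * y ^ 2 - 4 * (n + 2) * y + 2 * (n + 2)) := by
  rcases n with _ | m
  · simp only [Dg]; push_cast; ring
  · simp only [Dg, Nat.add_sub_cancel]; push_cast; ring

lemma T_fact (n : ℕ) (y : ℝ) :
    (2 * (n:ℝ) + 3) * y ^ 2 - 4 * (n + 2) * y + 2 * (n + 2)
      = (2 * n + 3) * (y - cc n) * (y - dd n) := by
  have hs : Real.sqrt (2 * (n:ℝ) + 4) ^ 2 = 2 * n + 4 := Real.sq_sqrt (by positivity)
  have hn : (0:ℝ) ≤ (n:ℝ) := Nat.cast_nonneg n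
  simp only [cc, dd]
  field_simp
  linear_combination hs

lemma cc_pos (n : ℕ) : 0 < cc n := by
  have hn : (0:ℝ) ≤ (n:ℝ) := Nat.cast_nonneg n
  have h1 : Real.sqrt (2 * (n:ℝ) + 4) < 2 * n + 4 :=
    (Real.sqrt_lt' (by linarith)).mpr (by nlinarith)
  unfold cc
  apply div_pos (by linarith) (by positivity)

lemma cc_lt_one (n : ℕ) : cc n < 1 := by
  have h1 : (1:ℝ) < Real.sqrt (2 * (n:ℝ) + 4) := by
    rw [show (1:ℝ) = Real.sqrt 1 by simp]
    have hn : (0:ℝ) ≤ (n:ℝ) := Nat.cast_nonneg n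
    exact Real.sqrt_lt_sqrt (by norm_num) (by linarith)
  unfold cc
  rw [div_lt_one (by positivity)]
  linarith

lemma one_lt_dd (n : ℕ) : 1 < dd n := by
  have h0 : (0:ℝ) ≤ Real.sqrt (2 * (n:ℝ) + 4) := Real.sqrt_nonneg _
  unfold dd
  rw [lt_div_iff₀ (by positivity)]
  linarith

lemma Gg_cont (n : ℕ) : Continuous (Gg n) := by
  unfold Gg; fun_prop

lemma Dg_pos (n : ℕ) {y : ℝ} (hy : y ∈ Ioo (0:ℝ) (cc n)) : 0 < Dg n y := by
  have hy1 : y < 1 := hy.2.trans (cc_lt_one n)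
  have h2y : (0:ℝ) < 2 - y := by linarith
  have hT : 0 < (2 * (n:ℝ) + 3) * y ^ 2 - 4 * (n + 2) * y + 2 * (n + 2) := by
    rw [T_fact]
    have h1 : y - cc n < 0 := by linarith [hy.2]
    have h2 : y - dd n < 0 := by linarith [(cc_lt_one n).trans (one_lt_dd n), hy.2]
    have hn : (0:ℝ) ≤ (n:ℝ) := Nat.cast_nonneg n
    have := mul_pos_of_neg_of_neg h1 h2
    nlinarith
  have hR : 0 < (2 - y) * Dg n y := by
    rw [key_id_s19]
    have := pow_pos hy.1 n
    have := pow_pos h2y n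
    positivity
  nlinarith

lemma Dg_neg (n : ℕ) {y : ℝ} (hy : y ∈ Ioo (cc n) 1) : Dg n y < 0 := by
  have hy0 : 0 < y := (cc_pos n).trans hy.1
  have h2y : (0:ℝ) < 2 - y := by linarith [hy.2]
  have hT : (2 * (n:ℝ) + 3) * y ^ 2 - 4 * (n + 2) * y + 2 * (n + 2) < 0 := by
    rw [T_fact]
    have h1 : 0 < y - cc n := by linarith [hy.1]
    have h2 : y - dd n < 0 := by linarith [one_lt_dd n, hy.2]
    exact mul_neg_of_pos_of_neg (mul_pos (by positivity) h1) h2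
  have hR : (2 - y) * Dg n y < 0 := by
    rw [key_id_s19]
    have hyn := pow_pos hy0 n
    have h2n := pow_pos h2y n
    have hn : (0:ℝ) ≤ (n:ℝ) := Nat.cast_nonneg n
    exact mul_neg_of_pos_of_neg (by positivity) hT
  nlinarith

lemma Gg_mono (n : ℕ) : StrictMonoOn (Gg n) (Icc 0 (cc n)) :=
  strictMonoOn_of_deriv_pos (convex_Icc _ _) (Gg_cont n).continuousOn
    (fun y hy => by
      rw [interior_Icc] at hy
      rw [(hasDerivAt_Gg n y).deriv]
      exact Dg_pos n hy)

lemma Gg_anti (n : ℕ) : StrictAntiOn (Gg n) (Icc (cc n) 1) :=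
  strictAntiOn_of_deriv_neg (convex_Icc _ _) (Gg_cont n).continuousOn
    (fun y hy => by
      rw [interior_Icc] at hy
      rw [(hasDerivAt_Gg n y).deriv]
      exact Dg_neg n hy)

lemma Gg_one (n : ℕ) : Gg n 1 = 2 := by
  simp only [Gg, one_pow]
  ring

lemma crit_lt_cc (n : ℕ) {y : ℝ} (hy : y ∈ Ioo (0:ℝ) 1) (h1 : Gg n y = 1) : y < cc n := by
  by_contra h
  push_neg at h
  have := Gg_anti n ⟨h, hy.2.le⟩ ⟨h.trans hy.2.le, le_refl 1⟩ hy.2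
  rw [Gg_one, h1] at this
  linarith

theorem h_poly_unique_stationary_point (ρ : ℕ) (hρ : 1 ≤ ρ) :
    ∃ x : ℝ, x ∈ Set.Ioo (0:ℝ) 1 ∧
      deriv (fun y : ℝ => y * (1 - 2 * (1 - (1 - y) ^ 2) ^ ρ)) x = 0 ∧
      (∀ y ∈ Set.Ioo (0:ℝ) 1,
        deriv (fun z : ℝ => z * (1 - 2 * (1 - (1 - z) ^ 2) ^ ρ)) y = 0 → y = x) ∧
      ∀ y ∈ Set.Icc (0:ℝ) 1,
        y * (1 - 2 * (1 - (1 - y) ^ 2) ^ ρ) ≤ x * (1 - 2 * (1 - (1 - x) ^ 2) ^ ρ) := by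
  obtain ⟨n, rfl⟩ : ∃ n, ρ = n + 1 := ⟨ρ - 1, (Nat.succ_pred_eq_of_pos hρ).symm⟩
  have hfc : Continuous (fun y : ℝ => y * (1 - 2 * (1 - (1 - y) ^ 2) ^ (n + 1))) := by fun_prop
  obtain ⟨x₀, hx₀mem, hmax⟩ :=
    isCompact_Icc.exists_isMaxOn (Set.nonempty_Icc.mpr zero_le_one) hfc.continuousOn
  have hmax' := isMaxOn_iff.mp hmax
  have hderiv : ∀ y : ℝ,
      deriv (fun z : ℝ => z * (1 - 2 * (1 - (1 - z) ^ 2) ^ (n + 1))) y = 1 - Gg n y :=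
    fun y => (hasDerivAt_f n y).deriv
  -- f (1/8) > 0
  have hp : ((15:ℝ)/64) ^ (n + 1) ≤ 15/64 :=
    pow_le_of_le_one (by norm_num) (by norm_num) n.succ_ne_zero
  have hf18 : (0:ℝ) < (1/8 : ℝ) * (1 - 2 * (1 - (1 - 1/8) ^ 2) ^ (n + 1)) := by
    rw [show (1:ℝ) - (1 - 1/8) ^ 2 = 15/64 by norm_num]
    nlinarith
  have hx₀pos : 0 < x₀ * (1 - 2 * (1 - (1 - x₀) ^ 2) ^ (n + 1)) :=
    lt_of_lt_of_le hf18 (hmax' (1/8) (by norm_num))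
  have hx₀Ioo : x₀ ∈ Ioo (0:ℝ) 1 := by
    constructor
    · rcases (lt_or_eq_of_le hx₀mem.1) with h | h
      · exact h
      · exfalso; rw [← h] at hx₀pos; simp at hx₀pos
    · rcases (lt_or_eq_of_le hx₀mem.2) with h | h
      · exact h
      · exfalso; rw [h] at hx₀pos; simp at hx₀pos
  have hcrit : deriv (fun z : ℝ => z * (1 - 2 * (1 - (1 - z) ^ 2) ^ (n + 1))) x₀ = 0 :=
    (hmax.isLocalMax (Icc_mem_nhds hx₀Ioo.1 hx₀Ioo.2)).deriv_eq_zero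
  have hGx₀ : Gg n x₀ = 1 := by
    have := hderiv x₀; rw [hcrit] at this; linarith
  refine ⟨x₀, hx₀Ioo, hcrit, ?_, fun y hy => hmax' y hy⟩
  intro y hy hdy
  have hGy : Gg n y = 1 := by
    have := hderiv y; rw [hdy] at this; linarith
  have hylt := crit_lt_cc n hy hGy
  have hxlt := crit_lt_cc n hx₀Ioo hGx₀
  exact (Gg_mono n).injOn ⟨hy.1.le, hylt.le⟩ ⟨hx₀Ioo.1.le, hxlt.le⟩ (hGy.trans hGx₀.symm)
end
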